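/- (Cycle lemma / Spitzer's lemma.) Let N ≥ 1 and let a₁, …, a_N be real numbers such that a₁ + ⋯ + a_N = 0 and no proper partial sum of consecutive aᵢ's read cyclically vanishes, i.e., for every index i ∈ {1,…,N} and every j with 1 ≤ j < N, the sum a_i + a_{i+1} + ⋯ + a_{i+j−1} (indices taken modulo N) is nonzero. Then there exists exactly one index i ∈ {1,…,N} such that for every j with 1 ≤ j ≤ N, the sum of the first j terms of the cyclic permutation a_i, a_{i+1}, …, a_{i+N−1} (indices modulo N) is nonnegative. -/

import Mathlib

section aux

variable (N : ℕ) (a : ℕ → ℝ)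

private lemma cyc_sum_no_wrap (i j : ℕ) (hj : i + j ≤ N) :
    ∑ l ∈ Finset.range j, a ((i + l) % N) =
      ∑ l ∈ Finset.range (i + j), a l - ∑ l ∈ Finset.range i, a l := by
  rw [Finset.sum_range_add]
  have : ∀ l ∈ Finset.range j, a ((i + l) % N) = a (i + l) := by
    intro l hl
    simp only [Finset.mem_range] at hl
    rcases eq_or_lt_of_le hj with h | h
    · by_cases h' : i + l < N
      · rw [Nat.mod_eq_of_lt h']
      · omega
    · rw [Nat.mod_eq_of_lt (by omega)]
  rw [Finset.sum_congr rfl this]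
  ring

private lemma cyc_sum_wrap (hsum : ∑ l ∈ Finset.range N, a l = 0)
    (i j : ℕ) (hi : i < N) (hij : N < i + j) (hj : j ≤ N) :
    ∑ l ∈ Finset.range j, a ((i + l) % N) =
      ∑ l ∈ Finset.range (i + j - N), a l - ∑ l ∈ Finset.range i, a l := by
  have hsplit : j = (N - i) + (i + j - N) := by omega
  rw [hsplit, Finset.sum_range_add]
  have hNi : i + (N - i) = N := by omega
  have h1 : ∑ l ∈ Finset.range (N - i), a ((i + l) % N) =
      ∑ l ∈ Finset.range N, a l - ∑ l ∈ Finset.range i, a l := by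
    have := cyc_sum_no_wrap N a i (N - i) (by omega)
    rw [this, hNi]
  have h2 : ∀ l ∈ Finset.range (i + j - N), a ((i + (N - i + l)) % N) = a l := by
    intro l hl
    simp only [Finset.mem_range] at hl
    have : i + (N - i + l) = N + l := by omega
    rw [this, Nat.add_mod_left, Nat.mod_eq_of_lt (by omega)]
  rw [h1, Finset.sum_congr rfl h2, hsum]
  have h3 : i + (N - i + (i + j - N)) - N = i + j - N := by omega
  rw [h3]
  ring

end aux

/-- Cycle lemma (Spitzer's lemma): if `a 0, …, a (N-1)` are real numbers summing to `0`
such that no partial sum of fewer than `N` consecutive terms, read cyclically, vanishes,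
then there is exactly one starting index `i < N` such that all partial sums of the
cyclic permutation starting at `i` are nonnegative. -/
theorem cycle_lemma (N : ℕ) (hN : 1 ≤ N) (a : ℕ → ℝ)
    (hsum : ∑ l ∈ Finset.range N, a l = 0)
    (hnz : ∀ i < N, ∀ j, 1 ≤ j → j < N →
      (∑ l ∈ Finset.range j, a ((i + l) % N)) ≠ 0) :
    ∃! i, i < N ∧ ∀ j, 1 ≤ j → j ≤ N →
      0 ≤ ∑ l ∈ Finset.range j, a ((i + l) % N) := by
  set S : ℕ → ℝ := fun k => ∑ l ∈ Finset.range k, a l with hS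
  set T : ℕ → ℕ → ℝ := fun i j => ∑ l ∈ Finset.range j, a ((i + l) % N) with hT
  have hSN : S N = 0 := hsum
  have hS0 : S 0 = 0 := by simp [hS]
  have hT1 : ∀ i j, i + j ≤ N → T i j = S (i + j) - S i :=
    fun i j h => cyc_sum_no_wrap N a i j h
  have hT2 : ∀ i j, i < N → N < i + j → j ≤ N → T i j = S (i + j - N) - S i :=
    fun i j h1 h2 h3 => cyc_sum_wrap N a hsum i j h1 h2 h3
  -- pairing fact
  have hpair : ∀ i j, i < N → 1 ≤ j → j < N → T i j + T ((i + j) % N) (N - j) = 0 := by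
    intro i j hi hj1 hj2
    rcases le_or_gt (i + j) N with h | h
    · have h1 : T i j = S (i + j) - S i := hT1 i j h
      rcases eq_or_lt_of_le h with he | hlt
      · have : (i + j) % N = 0 := by rw [he]; exact Nat.mod_self N
        rw [this]
        have h2 : T 0 (N - j) = S (N - j) - S 0 := by
          have := hT1 0 (N - j) (by omega); simpa using this
        rw [h1, h2]
        have : S 0 = 0 := by simp [hS]
        have hij : i = N - j := by omega
        rw [he, hSN, hij, this]
        ring
      · have hmod : (i + j) % N = i + j := Nat.mod_eq_of_lt hlt
        rw [hmod]
        have h2 : T (i + j) (N - j) = S (i + j + (N - j) - N) - S (i + j) := by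
          rcases Nat.eq_zero_or_pos i with hi0 | hi0
          · have hb := hT1 (i + j) (N - j) (by omega)
            have e1 : i + j + (N - j) = N := by omega
            have e2 : i + j + (N - j) - N = 0 := by omega
            rw [hb, e1, Nat.sub_self, hSN, hS0]
          · exact hT2 (i + j) (N - j) hlt (by omega) (by omega)
        have : i + j + (N - j) - N = i := by omega
        rw [h1, h2, this]
        ring
    · have h1 : T i j = S (i + j - N) - S i := hT2 i j hi h (by omega)
      have hmod : (i + j) % N = i + j - N := by
        rw [Nat.mod_eq_sub_mod (by omega), Nat.mod_eq_of_lt (by omega)]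
      rw [hmod, h1]
      have h2 : T (i + j - N) (N - j) = S (i + j - N + (N - j)) - S (i + j - N) :=
        hT1 _ _ (by omega)
      have : i + j - N + (N - j) = i := by omega
      rw [h2, this]
      ring
  -- choose i minimizing S on range N
  obtain ⟨i, hiN, hmin⟩ : ∃ i, i < N ∧ ∀ k < N, S i ≤ S k := by
    obtain ⟨i, hi, hmin⟩ := Finset.exists_min_image (Finset.range N) S
      ⟨0, Finset.mem_range.mpr (by omega)⟩
    exact ⟨i, Finset.mem_range.mp hi, fun k hk => hmin k (Finset.mem_range.mpr hk)⟩
  have hprop : ∀ j, 1 ≤ j → j ≤ N → 0 ≤ T i j := by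
    intro j hj1 hj2
    rcases le_or_gt (i + j) N with h | h
    · rw [hT1 i j h]
      rcases eq_or_lt_of_le h with he | hlt
      · rw [he, hSN]
        have := hmin 0 (by omega)
        rw [hS0] at this
        linarith
      · have := hmin (i + j) hlt
        linarith
    · rw [hT2 i j hiN h hj2]
      have := hmin (i + j - N) (by omega)
      linarith
  refine ⟨i, ⟨hiN, hprop⟩, ?_⟩
  rintro y ⟨hyN, hyprop⟩
  by_contra hne
  have hj : ∃ j, 1 ≤ j ∧ j < N ∧ (i + j) % N = y := by
    rcases lt_or_gt_of_ne hne with h | h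
    · exact ⟨y + N - i, by omega, by omega, by
        have : i + (y + N - i) = N + y := by omega
        rw [this, Nat.add_mod_left, Nat.mod_eq_of_lt hyN]⟩
    · exact ⟨y - i, by omega, by omega, by
        have : i + (y - i) = y := by omega
        rw [this, Nat.mod_eq_of_lt hyN]⟩
  obtain ⟨j, hj1, hj2, hjy⟩ := hj
  have h1 : 0 < T i j := by
    have hge := hprop j hj1 hj2.le
    have hne1 := hnz i hiN j hj1 hj2
    exact lt_of_le_of_ne hge (Ne.symm hne1)
  have h2 : 0 < T y (N - j) := by
    have hge := hyprop (N - j) (by omega) (by omega)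
    have hne2 := hnz y hyN (N - j) (by omega) (by omega)
    exact lt_of_le_of_ne hge (Ne.symm hne2)
  have := hpair i j hiN hj1 hj2
  rw [hjy] at this
  linarith
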